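/- On the unit 2-sphere S², let x₁, x₂ be points with 0 < d(x₁,x₂) < π and let η be the minimizing geodesic from x₁ to x₂. For i = 1,2 let γ_i be a unit-speed geodesic starting at x_i meeting η orthogonally, and suppose γ₁ and γ₂ leave η on opposite sides, i.e., the angle at x₁ between the direction of γ₁ and the parallel transport along η of the direction of γ₂ exceeds π/2 (equivalently ∠_{x₁}(γ₁(ε), γ₂(ε)) > π/2 for small ε > 0). Then for all sufficiently small ε > 0, d(γ₁(ε), γ₂(ε)) > d(x₁, x₂). -/

import Mathlib

open scoped ENNReal RealInnerProductSpace
open Set Filter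

noncomputable section

/-- A complete metric space is *CAT(1)* if any two points at distance `< π` have a
midpoint, and the spherical (curvature 1) midpoint comparison inequality holds for
triangles of perimeter `< 2π`. -/
def IsCAT1 (X : Type*) [MetricSpace X] : Prop :=
  CompleteSpace X ∧
  (∀ x y : X, dist x y < Real.pi →
      ∃ m : X, dist x m = dist x y / 2 ∧ dist y m = dist x y / 2) ∧
  (∀ x y z m : X, dist x y < Real.pi →
      dist x m = dist x y / 2 → dist y m = dist x y / 2 →
      dist x z + dist y z + dist x y < 2 * Real.pi →
      (Real.cos (dist x z) + Real.cos (dist y z)) / 2 ≤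
        Real.cos (dist z m) * Real.cos (dist x y / 2))

/-- `γ` is a (unit–speed, minimizing) geodesic on the interval `[a,b]`. -/
def IsGeodesicOn {X : Type*} [MetricSpace X] (γ : ℝ → X) (a b : ℝ) : Prop :=
  ∀ s ∈ Set.Icc a b, ∀ t ∈ Set.Icc a b, dist (γ s) (γ t) = |s - t|

/-- A subset of a CAT(1) space is convex if any two of its points at distance `< π`
are joined by a geodesic inside the subset. -/
def IsConvexSet {X : Type*} [MetricSpace X] (C : Set X) : Prop :=
  ∀ x ∈ C, ∀ y ∈ C, dist x y < Real.pi →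
    ∃ γ : ℝ → X, γ 0 = x ∧ γ (dist x y) = y ∧ IsGeodesicOn γ 0 (dist x y) ∧
      ∀ t ∈ Set.Icc 0 (dist x y), γ t ∈ C

/-- The closed convex hull of a subset: the intersection of all closed convex sets
containing it. -/
def ClosedConvexHull {X : Type*} [MetricSpace X] (A : Set X) : Set X :=
  ⋂₀ {C : Set X | A ⊆ C ∧ IsClosed C ∧ IsConvexSet C}

/-- The (circum)radius `rad X = inf_x sup_y d(x,y)` of a metric space, as an
extended nonnegative real. -/
def eRad (X : Type*) [MetricSpace X] : ℝ≥0∞ :=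
  ⨅ x : X, ⨆ y : X, edist x y

set_option maxHeartbeats 1000000 in
/-- On the unit sphere `S² ⊂ ℝ³` (angular metric
`d(x,y) = arccos⟨x,y⟩`), if `γᵢ(t) = cos t • xᵢ + sin t • vᵢ` are unit-speed
geodesics starting at `x₁, x₂` (with `0 < d(x₁,x₂) < π`) meeting the geodesic
`x₁x₂` orthogonally (`vᵢ ⊥ x₁, x₂`) and leaving it on opposite sides
(`⟨v₁,v₂⟩ < 0`), then `d(γ₁(ε), γ₂(ε)) > d(x₁,x₂)` for all small `ε > 0`. -/
theorem statement8 (x₁ x₂ v₁ v₂ : EuclideanSpace ℝ (Fin 3))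
    (hx₁ : ‖x₁‖ = 1) (hx₂ : ‖x₂‖ = 1) (hv₁ : ‖v₁‖ = 1) (hv₂ : ‖v₂‖ = 1)
    (hd0 : 0 < Real.arccos ⟪x₁, x₂⟫) (hdπ : Real.arccos ⟪x₁, x₂⟫ < Real.pi)
    (h11 : ⟪v₁, x₁⟫ = 0) (h12 : ⟪v₁, x₂⟫ = 0)
    (h21 : ⟪v₂, x₁⟫ = 0) (h22 : ⟪v₂, x₂⟫ = 0)
    (hopp : ⟪v₁, v₂⟫ < 0) :
    ∃ ε₀ : ℝ, 0 < ε₀ ∧ ∀ ε : ℝ, 0 < ε → ε < ε₀ →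
      Real.arccos ⟪x₁, x₂⟫ <
        Real.arccos ⟪(Real.cos ε • x₁ + Real.sin ε • v₁ : EuclideanSpace ℝ (Fin 3)),
          (Real.cos ε • x₂ + Real.sin ε • v₂ : EuclideanSpace ℝ (Fin 3))⟫ := by
  have hx₁x₁ : ⟪x₁, x₁⟫ = 1 := by
    rw [real_inner_self_eq_norm_sq, hx₁]; norm_num
  have hx₂x₂ : ⟪x₂, x₂⟫ = 1 := by
    rw [real_inner_self_eq_norm_sq, hx₂]; norm_num
  have hv₁v₁ : ⟪v₁, v₁⟫ = 1 := by
    rw [real_inner_self_eq_norm_sq, hv₁]; norm_num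
  have hv₂v₂ : ⟪v₂, v₂⟫ = 1 := by
    rw [real_inner_self_eq_norm_sq, hv₂]; norm_num
  set c : ℝ := ⟪x₁, x₂⟫ with hc
  have hc1 : c < 1 := Real.arccos_pos.mp hd0
  have hcm1 : -1 < c := by
    by_contra h
    push_neg at h
    rw [Real.arccos_of_le_neg_one h] at hdπ
    exact lt_irrefl _ hdπ
  set w : ℝ := ⟪v₁, v₂⟫ with hwdef
  have hwabs : |w| ≤ 1 := by
    have := abs_real_inner_le_norm v₁ v₂
    rwa [hv₁, hv₂, one_mul] at this
  have hw1 : -1 ≤ w := neg_le_of_abs_le hwabs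
  -- Key: the orthogonality conditions force w = -1.
  have hw : w = -1 := by
    by_contra hne
    have hw1' : -1 < w := lt_of_le_of_ne hw1 (Ne.symm hne)
    have hwsq : w ^ 2 < 1 := by nlinarith [hopp]
    have hcsq : c ^ 2 < 1 := by nlinarith
    set s : ℝ := Real.sqrt (1 - c ^ 2) with hsdef
    have hs : 0 < s := Real.sqrt_pos.mpr (by linarith)
    have hs2 : s ^ 2 = 1 - c ^ 2 := Real.sq_sqrt (by linarith)
    set t : ℝ := Real.sqrt (1 - w ^ 2) with htdef
    have ht : 0 < t := Real.sqrt_pos.mpr (by linarith)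
    have ht2 : t ^ 2 = 1 - w ^ 2 := Real.sq_sqrt (by linarith)
    set y : EuclideanSpace ℝ (Fin 3) := s⁻¹ • (x₂ - c • x₁) with hydef
    set z : EuclideanSpace ℝ (Fin 3) := t⁻¹ • (v₂ - w • v₁) with hzdef
    have e12 : ⟪x₁, y⟫ = 0 := by
      simp only [hydef, inner_smul_right, inner_sub_right, inner_smul_right, hx₁x₁, ← hc]
      ring
    have e13 : ⟪x₁, v₁⟫ = 0 := by rw [real_inner_comm]; exact h11
    have a1 : ⟪x₁, v₂⟫ = 0 := by rw [real_inner_comm]; exact h21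
    have a2 : ⟪x₂, v₁⟫ = 0 := by rw [real_inner_comm]; exact h12
    have a3 : ⟪x₂, v₂⟫ = 0 := by rw [real_inner_comm]; exact h22
    have a4 : ⟪x₂, x₁⟫ = c := by rw [real_inner_comm]
    have a5 : ⟪v₂, v₁⟫ = w := by rw [hwdef, real_inner_comm]
    have e14 : ⟪x₁, z⟫ = 0 := by
      simp only [hzdef, inner_smul_right, inner_sub_right, inner_smul_right, a1, e13]
      ring
    have e22 : ⟪y, y⟫ = 1 := by
      have key : ⟪x₂ - c • x₁, x₂ - c • x₁⟫ = 1 - c ^ 2 := by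
        simp only [inner_sub_left, inner_sub_right, inner_smul_left, inner_smul_right,
          hx₁x₁, hx₂x₂, ← hc, a4, conj_trivial]
        ring
      simp only [hydef, inner_smul_left, inner_smul_right, key, conj_trivial]
      rw [← hs2, sq, inv_mul_cancel_left₀ (ne_of_gt hs), inv_mul_cancel₀ (ne_of_gt hs)]
    have e23 : ⟪y, v₁⟫ = 0 := by
      simp only [hydef, inner_smul_left, inner_sub_left, inner_smul_left, a2, e13, conj_trivial]
      ring
    have e24 : ⟪y, z⟫ = 0 := by
      simp only [hydef, hzdef, inner_smul_left, inner_smul_right, inner_sub_left,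
        inner_sub_right, a1, a2, a3, e13, conj_trivial]
      ring
    have e34 : ⟪v₁, z⟫ = 0 := by
      simp only [hzdef, inner_smul_right, inner_sub_right, inner_smul_right, hv₁v₁, ← hwdef]
      ring
    have e44 : ⟪z, z⟫ = 1 := by
      have key : ⟪v₂ - w • v₁, v₂ - w • v₁⟫ = 1 - w ^ 2 := by
        simp only [inner_sub_left, inner_sub_right, inner_smul_left, inner_smul_right,
          hv₁v₁, hv₂v₂, ← hwdef, a5, conj_trivial]
        ring
      simp only [hzdef, inner_smul_left, inner_smul_right, key, conj_trivial]
      rw [← ht2, sq, inv_mul_cancel_left₀ (ne_of_gt ht), inv_mul_cancel₀ (ne_of_gt ht)]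
    have e21 : ⟪y, x₁⟫ = 0 := by rw [real_inner_comm]; exact e12
    have e31 : ⟪v₁, x₁⟫ = 0 := h11
    have e41 : ⟪z, x₁⟫ = 0 := by rw [real_inner_comm]; exact e14
    have e32 : ⟪v₁, y⟫ = 0 := by rw [real_inner_comm]; exact e23
    have e42 : ⟪z, y⟫ = 0 := by rw [real_inner_comm]; exact e24
    have e43 : ⟪z, v₁⟫ = 0 := by rw [real_inner_comm]; exact e34
    have hon : Orthonormal ℝ (![x₁, y, v₁, z] : Fin 4 → EuclideanSpace ℝ (Fin 3)) := by
      rw [orthonormal_iff_ite]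
      intro i j
      fin_cases i <;> fin_cases j <;>
        simp [hx₁x₁, e22, hv₁v₁, e44, e12, e13, e14, e23, e24, e34,
          e21, e31, e41, e32, e42, e43, hx₁, hv₁,
          (by rw [norm_eq_sqrt_real_inner, e22, Real.sqrt_one] : ‖y‖ = 1),
          (by rw [norm_eq_sqrt_real_inner, e44, Real.sqrt_one] : ‖z‖ = 1)]
    have hcard := hon.linearIndependent.fintype_card_le_finrank
    rw [finrank_euclideanSpace_fin] at hcard
    simp at hcard
  -- Now the main estimate.
  refine ⟨Real.pi, Real.pi_pos, fun ε hε hεπ => ?_⟩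
  have hsin : 0 < Real.sin ε := Real.sin_pos_of_pos_of_lt_pi hε hεπ
  have hinner :
      ⟪(Real.cos ε • x₁ + Real.sin ε • v₁ : EuclideanSpace ℝ (Fin 3)),
        (Real.cos ε • x₂ + Real.sin ε • v₂ : EuclideanSpace ℝ (Fin 3))⟫ =
      Real.cos ε ^ 2 * c - Real.sin ε ^ 2 := by
    have a3 : ⟪x₁, v₂⟫ = 0 := by rw [real_inner_comm]; exact h21
    simp only [inner_add_left, inner_add_right, inner_smul_left, inner_smul_right,
      a3, h12, ← hc, ← hwdef, hw, conj_trivial]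
    ring
  rw [hinner]
  have hpyth : Real.cos ε ^ 2 + Real.sin ε ^ 2 = 1 := by
    rw [add_comm]; exact Real.sin_sq_add_cos_sq ε
  have h1 : 0 < Real.sin ε ^ 2 * (c + 1) := mul_pos (pow_pos hsin 2) (by linarith)
  have hlt : Real.cos ε ^ 2 * c - Real.sin ε ^ 2 < c := by nlinarith [h1, hpyth]
  have hge : -1 ≤ Real.cos ε ^ 2 * c - Real.sin ε ^ 2 := by
    nlinarith [sq_nonneg (Real.cos ε), hpyth]
  exact Real.strictAntiOn_arccos ⟨hge, by linarith⟩ ⟨by linarith, le_of_lt hc1⟩ hlt
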